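/- Let d ≥ 1 and k ∈ ℕ with 1 ≤ k ≤ d, and let Q₀ ⊂ ℝ^d be a cube. There is a constant C > 0 depending only on d and k such that: if u ∈ BMO^k(Q₀) and H_k is any k-dimensional affine subspace of ℝ^d parallel to (the faces of) Q₀ which meets Q₀, then the restriction u|_{Q₀∩H_k} belongs to BMO(Q₀∩H_k) (classical bounded mean oscillation on the k-dimensional cube Q₀∩H_k with respect to the k-dimensional Hausdorff measure 𝓗^k) and ‖u|_{Q₀∩H_k}‖_{BMO(Q₀∩H_k)} ≤ C ‖u‖_{BMO^k(Q₀)}. -/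

import Mathlib

open Set MeasureTheory ENNReal NNReal Filter

noncomputable section

/-- `ℝ^d` with the Euclidean metric. -/
abbrev Euc (d : ℕ) : Type := EuclideanSpace ℝ (Fin d)

/-- An axis-parallel cube in `ℝ^d`, given by its lower corner and (positive) side length. -/
structure Cube (d : ℕ) where
  corner : Fin d → ℝ
  side : ℝ
  side_pos : 0 < side

namespace Cube

/-- The (half-open) set of points of the cube. -/
def set {d : ℕ} (Q : Cube d) : Set (Euc d) :=
  {x : Euc d | ∀ i, Q.corner i ≤ x i ∧ x i < Q.corner i + Q.side}

/-- The dyadic lattice `𝓓(Q)` generated by `Q`: all cubes of side `l(Q)·2ⁿ` (`n : ℤ`) with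
corners on the correspondingly rescaled grid anchored at the corner of `Q`; equivalently `Q`,
its dyadic ancestors, and all of their repeated dyadic subdivisions. -/
def dyadic {d : ℕ} (Q : Cube d) : Set (Cube d) :=
  {Q' | ∃ (n : ℤ) (k : Fin d → ℤ), Q'.side = Q.side * 2 ^ n ∧
    ∀ i, Q'.corner i = Q.corner i + (k i : ℝ) * (Q.side * 2 ^ n)}

end Cube

/-- The spherical Hausdorff content `𝓗^β_∞`, with `ω_β = π^{β/2}/Γ(β/2+1)`. -/
def hausdorffContent (d : ℕ) (β : ℝ) (E : Set (Euc d)) : ℝ≥0∞ :=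
  ⨅ (c : ℕ → Euc d × ℝ) (_ : E ⊆ ⋃ i, Metric.ball (c i).1 (c i).2),
    ∑' i, ENNReal.ofReal (Real.pi ^ (β / 2) / Real.Gamma (β / 2 + 1) * (c i).2 ^ β)

/-- The dyadic Hausdorff content `𝓗^{β,Q}_∞` adapted to the cube `Q`. -/
def dyadicContent (d : ℕ) (β : ℝ) (Q : Cube d) (E : Set (Euc d)) : ℝ≥0∞ :=
  ⨅ (c : ℕ → Cube d) (_ : ∀ i, c i ∈ Q.dyadic) (_ : E ⊆ ⋃ i, (c i).set),
    ∑' i, ENNReal.ofReal ((c i).side ^ β)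

/-- The Choquet integral `∫_A f dH := ∫_0^∞ H({x ∈ A : f x > t}) dt`. -/
def choquetIntegral {X : Type*} (H : Set X → ℝ≥0∞) (A : Set X) (f : X → ℝ) : ℝ≥0∞ :=
  ∫⁻ t in Set.Ioi (0 : ℝ), H {x | x ∈ A ∧ t < f x}

/-- `f` is `H`-quasicontinuous: for every `ε > 0` there is an open set `O` with `H O < ε`
such that `f` restricted to `Oᶜ` is continuous. -/
def QuasiContinuous {X : Type*} [TopologicalSpace X] (H : Set X → ℝ≥0∞) (f : X → ℝ) : Prop :=
  ∀ ε : ℝ, 0 < ε → ∃ O : Set X, IsOpen O ∧ H O < ENNReal.ofReal ε ∧ ContinuousOn f Oᶜ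

/-- `f ∈ L¹(A; H)`: `f` is `H`-quasicontinuous and `∫_A |f| dH < ∞`. -/
def MemChoquetL1 {X : Type*} [TopologicalSpace X] (H : Set X → ℝ≥0∞) (A : Set X)
    (f : X → ℝ) : Prop :=
  QuasiContinuous H f ∧ choquetIntegral H A (fun x => |f x|) < ⊤

/-- The `BMO^β(Q₀)` seminorm: `sup_{Q ⊆ Q₀} inf_{c ∈ ℝ} l(Q)^{-β} ∫_Q |u - c| d𝓗^β_∞`. -/
def bmoSeminorm (d : ℕ) (β : ℝ) (Q₀ : Set (Euc d)) (u : Euc d → ℝ) : ℝ≥0∞ :=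
  ⨆ (Q : Cube d) (_ : Q.set ⊆ Q₀),
    ⨅ c : ℝ, choquetIntegral (hausdorffContent d β) Q.set (fun x => |u x - c|) /
      ENNReal.ofReal (Q.side ^ β)

/-- Membership in `BMO^β(Q₀)`. -/
def MemBMO (d : ℕ) (β : ℝ) (Q₀ : Set (Euc d)) (u : Euc d → ℝ) : Prop :=
  MemChoquetL1 (hausdorffContent d β) Q₀ u ∧ bmoSeminorm d β Q₀ u < ⊤


/-- The classical John–Nirenberg BMO seminorm on `Q₀` with respect to Lebesgue measure. -/
def bmoClassical (d : ℕ) (Q₀ : Set (Euc d)) (u : Euc d → ℝ) : ℝ≥0∞ :=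
  ⨆ (Q : Cube d) (_ : Q.set ⊆ Q₀),
    (volume Q.set)⁻¹ * ∫⁻ x in Q.set, ENNReal.ofReal |u x - ⨍ y in Q.set, u y|

/-- The axis-parallel affine subspace of `ℝ^d` obtained by freeing the coordinates in `S`
and fixing the remaining coordinates to the values of `b`. -/
def hyperplane (d : ℕ) (S : Finset (Fin d)) (b : Fin d → ℝ) : Set (Euc d) :=
  {x : Euc d | ∀ i ∉ S, x i = b i}

/-- The classical BMO seminorm of `u` on `Q₀ ∩ H` with respect to the `k`-dimensional
Hausdorff measure `𝓗^k`, the supremum being over the subcubes `Q.set ∩ H ⊆ Q₀ ∩ H`. -/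
def bmoClassicalOnPlane (d k : ℕ) (Q₀ : Cube d) (H : Set (Euc d)) (u : Euc d → ℝ) : ℝ≥0∞ :=
  ⨆ (Q : Cube d) (_ : Q.set ∩ H ⊆ Q₀.set),
    (Measure.hausdorffMeasure (k : ℝ) (Q.set ∩ H))⁻¹ *
      ∫⁻ x in Q.set ∩ H,
        ENNReal.ofReal |u x - ⨍ y in Q.set ∩ H, u y ∂(Measure.hausdorffMeasure (k : ℝ))|
          ∂(Measure.hausdorffMeasure (k : ℝ))

/-- The unique dyadic cube of `𝓓(Q)` of generation `n` (side `l(Q)·2^{-n}`) containing `x`. -/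
def dyadicCubeAt {d : ℕ} (Q : Cube d) (n : ℕ) (x : Euc d) : Cube d where
  corner := fun i => Q.corner i + Q.side * (2 : ℝ)⁻¹ ^ n *
    (⌊(x i - Q.corner i) / (Q.side * (2 : ℝ)⁻¹ ^ n)⌋ : ℝ)
  side := Q.side * (2 : ℝ)⁻¹ ^ n
  side_pos := by have := Q.side_pos; positivity

/-- The dyadic `β`-Hausdorff maximal function associated to `𝓗^{β,Q}_∞`. -/
def dyadicMaximal (d : ℕ) (β : ℝ) (Q : Cube d) (f : Euc d → ℝ) (x : Euc d) : ℝ≥0∞ :=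
  ⨆ (Q' : Cube d) (_ : Q' ∈ Q.dyadic) (_ : x ∈ Q'.set),
    choquetIntegral (dyadicContent d β Q) Q'.set (fun y => |f y|) / ENNReal.ofReal (Q'.side ^ β)

/-- The `BMO^{β,p}(Q₀)` seminorm. -/
def bmoSeminormP (d : ℕ) (β p : ℝ) (Q₀ : Set (Euc d)) (u : Euc d → ℝ) : ℝ≥0∞ :=
  ⨆ (Q : Cube d) (_ : Q.set ⊆ Q₀),
    ⨅ c : ℝ, (choquetIntegral (hausdorffContent d β) Q.set (fun x => |u x - c| ^ p) /
      ENNReal.ofReal (Q.side ^ β)) ^ (1 / p)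

/-- The standard normalization constant `γ(α) = π^{d/2} 2^α Γ(α/2) / Γ((d-α)/2)`. -/
def rieszConst (d : ℕ) (α : ℝ) : ℝ :=
  Real.pi ^ ((d : ℝ) / 2) * 2 ^ α * Real.Gamma (α / 2) / Real.Gamma (((d : ℝ) - α) / 2)

/-- The Riesz potential `I_α μ (x) = γ(α)⁻¹ ∫ |x - y|^{α - d} dμ(y)`. -/
def rieszPotential (d : ℕ) (α : ℝ) (μ : Measure (Euc d)) (x : Euc d) : ℝ :=
  (rieszConst d α)⁻¹ * (∫⁻ y, ENNReal.ofReal (‖x - y‖ ^ (α - (d : ℝ))) ∂μ).toReal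

/-- The Morrey norm `‖μ‖_{ℳ^γ} = sup_{x, r>0} μ(B(x,r))/r^γ`. -/
def morreyNorm (d : ℕ) (γ : ℝ) (μ : Measure (Euc d)) : ℝ≥0∞ :=
  ⨆ (x : Euc d) (r : ℝ) (_ : 0 < r), μ (Metric.ball x r) / ENNReal.ofReal (r ^ γ)

/-- The dyadic `BMO^β_*(Q₀)` seminorm, where for each subcube `Q` the dyadic Hausdorff
content adapted to that `Q` is used. -/
def bmoDyadicSeminorm (d : ℕ) (β : ℝ) (Q₀ : Set (Euc d)) (u : Euc d → ℝ) : ℝ≥0∞ :=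
  ⨆ (Q : Cube d) (_ : Q.set ⊆ Q₀),
    ⨅ c : ℝ, choquetIntegral (dyadicContent d β Q) Q.set (fun x => |u x - c|) /
      ENNReal.ofReal (Q.side ^ β)

/-- A (possibly infinite) cube in `ℝ^d`: either a finite cube, or a product of intervals
which are infinite in every coordinate direction. -/
def IsGenCube (d : ℕ) (S : Set (Euc d)) : Prop :=
  (∃ Q : Cube d, S = Q.set) ∨
  (∃ I : Fin d → Set ℝ,
      (∀ i, (∃ a, I i = Set.Ici a) ∨ (∃ b, I i = Set.Iio b) ∨ I i = Set.univ) ∧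
      S = {x : Euc d | ∀ i, x i ∈ I i})

/-- The Choquet integral of an `ℝ≥0∞`-valued function. -/
def choquetIntegralE {X : Type*} (H : Set X → ℝ≥0∞) (f : X → ℝ≥0∞) : ℝ≥0∞ :=
  ∫⁻ t in Set.Ioi (0 : ℝ), H {x | ENNReal.ofReal t < f x}

section Aux

variable {d k : ℕ}

lemma measurable_coord (d : ℕ) (i : Fin d) : Measurable fun x : Euc d => x i :=
  ((continuous_apply i).comp (PiLp.continuous_ofLp 2 _)).measurable

lemma measurableSet_cubeSet (Q : Cube d) : MeasurableSet Q.set := by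
  have : Q.set = ⋂ i, (fun x : Euc d => x i) ⁻¹' Set.Ico (Q.corner i) (Q.corner i + Q.side) := by
    ext x; simp [Cube.set, Set.mem_Ico]
  rw [this]
  exact MeasurableSet.iInter fun i => (measurable_coord d i) measurableSet_Ico

lemma measurableSet_hyperplane (S : Finset (Fin d)) (b : Fin d → ℝ) :
    MeasurableSet (hyperplane d S b) := by
  have : hyperplane d S b = ⋂ i, ⋂ (_ : i ∉ S), (fun x : Euc d => x i) ⁻¹' {b i} := by
    ext x; simp [hyperplane]
  rw [this]
  exact MeasurableSet.iInter fun i => MeasurableSet.iInter fun _ =>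
    (measurable_coord d i) (measurableSet_singleton _)

lemma hausdorffContent_mono {β : ℝ} {E F : Set (Euc d)} (h : E ⊆ F) :
    hausdorffContent d β E ≤ hausdorffContent d β F := by
  refine le_iInf₂ fun c hc => ?_
  exact iInf₂_le c (h.trans hc)

lemma le_mul_iInf' {ι : Sort*} [Nonempty ι] {K a : ℝ≥0∞} (hK0 : K ≠ 0) (hKt : K ≠ ⊤)
    {f : ι → ℝ≥0∞} (h : ∀ i, a ≤ K * f i) : a ≤ K * ⨅ i, f i := by
  have h1 : a / K ≤ ⨅ i, f i := by
    refine le_iInf fun i => ?_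
    rw [ENNReal.div_le_iff_le_mul (Or.inl hK0) (Or.inl hKt)]
    exact (h i).trans (by rw [mul_comm])
  calc a = K * (a / K) := (ENNReal.mul_div_cancel hK0 hKt).symm
    _ ≤ K * ⨅ i, f i := mul_le_mul_right h1 K

/-- Layer-cake upper bound for an arbitrary (possibly non-measurable) function. -/
lemma lintegral_le_layer {X : Type*} [MeasurableSpace X] (μ : Measure X) {A : Set X}
    (hA : MeasurableSet A) (f : X → ℝ) :
    ∫⁻ x in A, ENNReal.ofReal (f x) ∂μ ≤
      ∫⁻ t in Set.Ioi (0 : ℝ), μ {x | x ∈ A ∧ t < f x} := by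
  rw [MeasureTheory.lintegral_def]
  refine iSup₂_le fun φ hφ => ?_
  have hfin : ∀ x, φ x ≠ ⊤ := fun x => ne_top_of_le_ne_top ENNReal.ofReal_ne_top (hφ x)
  set g : X → ℝ := fun x => (φ x).toReal with hg
  have hgm : Measurable g := φ.measurable.ennreal_toReal
  have key : ∫⁻ x, ENNReal.ofReal (g x) ∂(μ.restrict A)
      = ∫⁻ t in Set.Ioi (0:ℝ), (μ.restrict A) {x | t < g x} :=
    MeasureTheory.lintegral_eq_lintegral_meas_lt _ (Filter.Eventually.of_forall fun x =>
      ENNReal.toReal_nonneg) hgm.aemeasurable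
  have e1 : φ.lintegral (μ.restrict A) = ∫⁻ x, ENNReal.ofReal (g x) ∂(μ.restrict A) := by
    rw [← MeasureTheory.SimpleFunc.lintegral_eq_lintegral]
    exact lintegral_congr fun x => (ENNReal.ofReal_toReal (hfin x)).symm
  rw [e1, key]
  refine setLIntegral_mono' measurableSet_Ioi fun t ht => ?_
  rw [Set.mem_Ioi] at ht
  rw [Measure.restrict_apply' hA]
  refine measure_mono fun x hx => ?_
  rcases hx with ⟨hlt, hxA⟩
  refine ⟨hxA, ?_⟩
  by_contra hcon
  push_neg at hcon
  have h2 : φ x ≤ ENNReal.ofReal t := (hφ x).trans (ENNReal.ofReal_le_ofReal hcon)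
  have h3 : g x ≤ t := by
    have := ENNReal.toReal_mono ENNReal.ofReal_ne_top h2
    rwa [ENNReal.toReal_ofReal ht.le] at this
  exact absurd hlt (not_lt.mpr h3)

end Aux
section Slice

variable {d k : ℕ} (S : Finset (Fin d)) (b : Fin d → ℝ) (e : Fin k ≃ {i : Fin d // i ∈ S})

/-- The isometric parametrization of the hyperplane. -/
def sliceMap : Euc k → Euc d := fun y => WithLp.toLp 2 (fun i => if h : i ∈ S then y (e.symm ⟨i, h⟩) else b i)

lemma sliceMap_apply (y : Euc k) (i : Fin d) :
    sliceMap S b e y i = if h : i ∈ S then y (e.symm ⟨i, h⟩) else b i := rfl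

lemma isometry_sliceMap : Isometry (sliceMap S b e) := by
  refine Isometry.of_dist_eq fun y z => ?_
  rw [EuclideanSpace.dist_eq, EuclideanSpace.dist_eq]
  congr 1
  have hvanish : ∀ i ∈ Finset.univ, i ∉ S →
      dist (sliceMap S b e y i) (sliceMap S b e z i) ^ 2 = 0 := by
    intro i _ hi
    simp [sliceMap_apply, hi]
  rw [← Finset.sum_subset (Finset.subset_univ S) hvanish]
  rw [← Finset.sum_coe_sort S (fun i => dist (sliceMap S b e y i) (sliceMap S b e z i) ^ 2)]
  rw [← Equiv.sum_comp e (fun a : {i : Fin d // i ∈ S} =>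
    dist (sliceMap S b e y ↑a) (sliceMap S b e z ↑a) ^ 2)]
  refine Finset.sum_congr rfl fun j _ => ?_
  have h : ((e j : {i : Fin d // i ∈ S}) : Fin d) ∈ S := (e j).2
  simp only [sliceMap_apply, h, dif_pos]
  have h2 : (⟨((e j : {i : Fin d // i ∈ S}) : Fin d), h⟩ : {i : Fin d // i ∈ S}) = e j :=
    Subtype.ext rfl
  rw [h2, e.symm_apply_apply]

lemma sliceMap_mem_hyperplane (y : Euc k) : sliceMap S b e y ∈ hyperplane d S b := by
  intro i hi
  simp [sliceMap_apply, hi]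

lemma hyperplane_subset_range : hyperplane d S b ⊆ Set.range (sliceMap S b e) := by
  intro x hx
  refine ⟨WithLp.toLp 2 (fun j => x (e j)), ?_⟩
  ext i
  rw [sliceMap_apply]
  split_ifs with h
  · exact congrArg (fun j => x j) (congrArg Subtype.val (e.apply_symm_apply ⟨i, h⟩))
  · exact (hx i h).symm

lemma image_preimage_sliceMap {E : Set (Euc d)} (hE : E ⊆ hyperplane d S b) :
    sliceMap S b e '' (sliceMap S b e ⁻¹' E) = E :=
  Set.image_preimage_eq_of_subset (hE.trans (hyperplane_subset_range S b e))

end Slice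

section PiCompare

variable {k : ℕ}

/-- Identity map from Euclidean space to the sup-metric product. -/
def toPi : Euc k → (Fin k → ℝ) := fun y i => y i

/-- Identity map from the sup-metric product to Euclidean space. -/
def ofPi : (Fin k → ℝ) → Euc k := fun y => WithLp.toLp 2 (fun i => y i)

lemma lipschitz_toPi : LipschitzWith 1 (toPi (k := k)) := by
  refine LipschitzWith.of_dist_le_mul fun y z => ?_
  simp only [NNReal.coe_one, one_mul]
  refine (dist_pi_le_iff dist_nonneg).2 fun i => ?_
  rw [EuclideanSpace.dist_eq]
  have h1 : dist (y i) (z i) ^ 2 ≤ ∑ j, dist (y j) (z j) ^ 2 :=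
    Finset.single_le_sum (f := fun j => dist (y j) (z j) ^ 2)
      (fun j _ => sq_nonneg _) (Finset.mem_univ i)
  calc dist (toPi y i) (toPi z i)
      = Real.sqrt (dist (toPi y i) (toPi z i) ^ 2) := (Real.sqrt_sq dist_nonneg).symm
    _ ≤ Real.sqrt (∑ j, dist (y j) (z j) ^ 2) := Real.sqrt_le_sqrt h1

lemma lipschitz_ofPi (hk : 1 ≤ k) : LipschitzWith (k : ℝ≥0) (ofPi (k := k)) := by
  refine LipschitzWith.of_dist_le_mul fun y z => ?_
  rw [EuclideanSpace.dist_eq]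
  have hb : ∀ j : Fin k, dist (ofPi y j) (ofPi z j) ^ 2 ≤ dist y z ^ 2 := by
    intro j
    have := dist_le_pi_dist y z j
    exact pow_le_pow_left₀ dist_nonneg this 2
  have h1 : ∑ j, dist (ofPi y j) (ofPi z j) ^ 2 ≤ (k : ℝ) * dist y z ^ 2 := by
    calc ∑ j, dist (ofPi y j) (ofPi z j) ^ 2 ≤ ∑ _j : Fin k, dist y z ^ 2 :=
          Finset.sum_le_sum fun j _ => hb j
      _ = (k : ℝ) * dist y z ^ 2 := by simp [mul_comm]
  have h2 : (k : ℝ) * dist y z ^ 2 ≤ ((k : ℝ) * dist y z) ^ 2 := by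
    rw [mul_pow]
    have hk1 : (1 : ℝ) ≤ (k : ℝ) := by exact_mod_cast hk
    have hkk : (k : ℝ) ≤ (k : ℝ) ^ 2 := by nlinarith
    nlinarith [mul_nonneg (sub_nonneg.2 hkk) (sq_nonneg (dist y z))]
  calc Real.sqrt (∑ j, dist (ofPi y j) (ofPi z j) ^ 2)
      ≤ Real.sqrt (((k : ℝ) * dist y z) ^ 2) := Real.sqrt_le_sqrt (h1.trans h2)
    _ = (k : ℝ) * dist y z := Real.sqrt_sq (by positivity)
    _ = ((k : ℝ≥0) : ℝ) * dist y z := by norm_num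

lemma hausdorff_pi_eq_volume (hk : 1 ≤ k) :
    (Measure.hausdorffMeasure (k : ℝ) : Measure (Fin k → ℝ)) = volume := by
  have := MeasureTheory.hausdorffMeasure_pi_real (ι := Fin k)
  simpa using this

lemma volume_image_toPi_le (hk : 1 ≤ k) (A : Set (Euc k)) :
    volume (toPi '' A) ≤ Measure.hausdorffMeasure (k : ℝ) A := by
  rw [← hausdorff_pi_eq_volume hk]
  have := lipschitz_toPi.hausdorffMeasure_image_le (d := (k : ℝ)) (by positivity) A
  simpa using this

lemma hausdorff_le_volume_image_toPi (hk : 1 ≤ k) (A : Set (Euc k)) :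
    Measure.hausdorffMeasure (k : ℝ) A ≤ ENNReal.ofReal ((k : ℝ) ^ k) * volume (toPi '' A) := by
  have himg : ofPi '' (toPi '' A) = A := by
    rw [Set.image_image]
    exact Set.image_id' A
  have := (lipschitz_ofPi hk).hausdorffMeasure_image_le (d := (k : ℝ)) (by positivity)
    (toPi '' A)
  rw [himg, hausdorff_pi_eq_volume hk] at this
  refine this.trans (mul_le_mul_left (le_of_eq ?_) _)
  rw [ENNReal.rpow_natCast, ENNReal.ofReal_pow (by positivity), ENNReal.ofReal_natCast]
  norm_cast

end PiCompare
section ContentCompare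

variable {d k : ℕ}

/-- The normalizing constant `ω_k`. -/
def omegaK (k : ℕ) : ℝ := Real.pi ^ ((k : ℝ) / 2) / Real.Gamma ((k : ℝ) / 2 + 1)

lemma omegaK_pos (k : ℕ) : 0 < omegaK k := by
  unfold omegaK
  have h1 : 0 < Real.pi ^ ((k : ℝ) / 2) := Real.rpow_pos_of_pos Real.pi_pos _
  have h2 : 0 < Real.Gamma ((k : ℝ) / 2 + 1) := Real.Gamma_pos_of_pos (by positivity)
  positivity

/-- The comparison constant. -/
def cK (k : ℕ) : ℝ := (k : ℝ) ^ k * 4 ^ k / omegaK k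

lemma cK_pos (k : ℕ) (hk : 1 ≤ k) : 0 < cK k := by
  unfold cK
  have := omegaK_pos k
  have hk0 : (0 : ℝ) < (k : ℝ) := by exact_mod_cast hk
  positivity

lemma le_mul_iInf₂ {ι : Sort*} {p : ι → Prop} {K a : ℝ≥0∞} (hK0 : K ≠ 0) (hKt : K ≠ ⊤)
    {f : (i : ι) → p i → ℝ≥0∞} (h : ∀ i hi, a ≤ K * f i hi) :
    a ≤ K * ⨅ (i) (hi), f i hi := by
  have h1 : a / K ≤ ⨅ (i) (hi), f i hi := by
    refine le_iInf₂ fun i hi => ?_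
    rw [ENNReal.div_le_iff_le_mul (Or.inl hK0) (Or.inl hKt)]
    exact (h i hi).trans (by rw [mul_comm])
  calc a = K * (a / K) := (ENNReal.mul_div_cancel hK0 hKt).symm
    _ ≤ _ := mul_le_mul_right h1 K

lemma measure_hyperplane_inter_ball_le (hk : 1 ≤ k) (S : Finset (Fin d)) (b : Fin d → ℝ)
    (e : Fin k ≃ {i : Fin d // i ∈ S}) (x : Euc d) {r : ℝ} (hr : 0 < r) :
    Measure.hausdorffMeasure (k : ℝ) (hyperplane d S b ∩ Metric.ball x r) ≤
      ENNReal.ofReal ((k : ℝ) ^ k * 4 ^ k * r ^ k) := by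
  set E := hyperplane d S b ∩ Metric.ball x r with hE
  rcases Set.eq_empty_or_nonempty E with h | ⟨z, hz⟩
  · rw [h]; simp
  obtain ⟨y₀, hy₀⟩ := hyperplane_subset_range S b e hz.1
  set pre := sliceMap S b e ⁻¹' E with hpre
  have himg : sliceMap S b e '' pre = E :=
    image_preimage_sliceMap S b e Set.inter_subset_left
  have hmeq : Measure.hausdorffMeasure (k : ℝ) E = Measure.hausdorffMeasure (k : ℝ) pre := by
    rw [← himg]
    exact (isometry_sliceMap S b e).hausdorffMeasure_image (Or.inl (by positivity)) pre
  have hball : pre ⊆ Metric.ball y₀ (2 * r) := by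
    intro y hy
    have h1 : dist (sliceMap S b e y) x < r := hy.2
    have h2 : dist (sliceMap S b e y₀) x < r := by rw [hy₀]; exact hz.2
    have := (isometry_sliceMap S b e).dist_eq y y₀
    rw [Metric.mem_ball, ← this]
    calc dist (sliceMap S b e y) (sliceMap S b e y₀)
        ≤ dist (sliceMap S b e y) x + dist (sliceMap S b e y₀) x := dist_triangle_right _ _ _
      _ < r + r := by linarith
      _ = 2 * r := by ring
  have hpiball : toPi '' pre ⊆ Metric.ball (toPi y₀) (2 * r) := by
    rintro _ ⟨y, hy, rfl⟩
    have h1 : dist y y₀ < 2 * r := hball hy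
    have := lipschitz_toPi.dist_le_mul y y₀
    simp only [NNReal.coe_one, one_mul] at this
    exact lt_of_le_of_lt this h1
  have hvol : volume (Metric.ball (toPi y₀) (2 * r)) ≤ ENNReal.ofReal ((4 * r) ^ k) := by
    rw [ball_pi _ (by linarith), volume_pi_pi]
    have : ∀ i : Fin k, volume (Metric.ball (toPi y₀ i) (2 * r)) = ENNReal.ofReal (4 * r) := by
      intro i
      rw [Real.volume_ball]
      congr 1; ring
    rw [Finset.prod_congr rfl fun i _ => this i]
    rw [Finset.prod_const, ← ENNReal.ofReal_pow (by linarith)]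
    simp
  calc Measure.hausdorffMeasure (k : ℝ) E
      = Measure.hausdorffMeasure (k : ℝ) pre := hmeq
    _ ≤ ENNReal.ofReal ((k : ℝ) ^ k) * volume (toPi '' pre) :=
        hausdorff_le_volume_image_toPi hk pre
    _ ≤ ENNReal.ofReal ((k : ℝ) ^ k) * ENNReal.ofReal ((4 * r) ^ k) :=
        mul_le_mul_right ((measure_mono hpiball).trans hvol) _
    _ = ENNReal.ofReal ((k : ℝ) ^ k * 4 ^ k * r ^ k) := by
        rw [← ENNReal.ofReal_mul (by positivity)]
        congr 1; ring

lemma measure_le_content (hk : 1 ≤ k) (S : Finset (Fin d)) (b : Fin d → ℝ)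
    (e : Fin k ≃ {i : Fin d // i ∈ S}) {E : Set (Euc d)} (hE : E ⊆ hyperplane d S b) :
    Measure.hausdorffMeasure (k : ℝ) E ≤
      ENNReal.ofReal (cK k) * hausdorffContent d (k : ℝ) E := by
  have hcK : 0 < cK k := cK_pos k hk
  rw [hausdorffContent]
  refine le_mul_iInf₂ (by simp [hcK]) ENNReal.ofReal_ne_top fun c hc => ?_
  have hcover : E ⊆ ⋃ i, E ∩ Metric.ball (c i).1 (c i).2 := by
    intro x hx
    obtain ⟨_, ⟨i, rfl⟩, hxi⟩ := hc hx
    exact Set.mem_iUnion.2 ⟨i, hx, hxi⟩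
  have hterm : ∀ i, Measure.hausdorffMeasure (k : ℝ) (E ∩ Metric.ball (c i).1 (c i).2) ≤
      ENNReal.ofReal (cK k) *
        ENNReal.ofReal (Real.pi ^ ((k : ℝ) / 2) / Real.Gamma ((k : ℝ) / 2 + 1) *
          (c i).2 ^ (k : ℝ)) := by
    intro i
    rcases le_or_gt (c i).2 0 with hr | hr
    · have : Metric.ball (c i).1 (c i).2 = ∅ := Metric.ball_eq_empty.2 hr
      rw [this]
      simp
    · have h1 : Measure.hausdorffMeasure (k : ℝ) (E ∩ Metric.ball (c i).1 (c i).2) ≤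
          ENNReal.ofReal ((k : ℝ) ^ k * 4 ^ k * (c i).2 ^ k) := by
        refine le_trans (measure_mono (Set.inter_subset_inter_left _ hE)) ?_
        exact measure_hyperplane_inter_ball_le hk S b e (c i).1 hr
      refine h1.trans (le_of_eq ?_)
      rw [← ENNReal.ofReal_mul (le_of_lt hcK)]
      congr 1
      rw [Real.rpow_natCast]
      unfold cK omegaK
      have hω := omegaK_pos k
      unfold omegaK at hω
      field_simp
  calc Measure.hausdorffMeasure (k : ℝ) E
      ≤ ∑' i, Measure.hausdorffMeasure (k : ℝ) (E ∩ Metric.ball (c i).1 (c i).2) :=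
        (measure_mono hcover).trans (measure_iUnion_le _)
    _ ≤ ∑' i, ENNReal.ofReal (cK k) *
        ENNReal.ofReal (Real.pi ^ ((k : ℝ) / 2) / Real.Gamma ((k : ℝ) / 2 + 1) *
          (c i).2 ^ (k : ℝ)) := ENNReal.tsum_le_tsum hterm
    _ = ENNReal.ofReal (cK k) * ∑' i,
        ENNReal.ofReal (Real.pi ^ ((k : ℝ) / 2) / Real.Gamma ((k : ℝ) / 2 + 1) *
          (c i).2 ^ (k : ℝ)) := ENNReal.tsum_mul_left

lemma content_lt_top_of_subset_ball (hk : 1 ≤ k) {E : Set (Euc d)} {z : Euc d} {R : ℝ}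
    (hE : E ⊆ Metric.ball z R) : hausdorffContent d (k : ℝ) E < ⊤ := by
  set c : ℕ → Euc d × ℝ := fun n => if n = 0 then (z, R) else (z, 0) with hc
  have hcover : E ⊆ ⋃ i, Metric.ball (c i).1 (c i).2 := by
    intro x hx
    refine Set.mem_iUnion.2 ⟨0, ?_⟩
    simpa [hc] using hE hx
  have hle := iInf₂_le (f := fun (c : ℕ → Euc d × ℝ)
    (_ : E ⊆ ⋃ i, Metric.ball (c i).1 (c i).2) =>
      ∑' i, ENNReal.ofReal (Real.pi ^ ((k:ℝ) / 2) / Real.Gamma ((k:ℝ) / 2 + 1) *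
        (c i).2 ^ (k:ℝ))) c hcover
  refine lt_of_le_of_lt (le_trans (le_of_eq rfl) hle) ?_
  have hsum : ∑' i, ENNReal.ofReal (Real.pi ^ ((k:ℝ) / 2) / Real.Gamma ((k:ℝ) / 2 + 1) *
      (c i).2 ^ (k:ℝ)) = ENNReal.ofReal (Real.pi ^ ((k:ℝ) / 2) /
        Real.Gamma ((k:ℝ) / 2 + 1) * R ^ (k:ℝ)) := by
    rw [tsum_eq_single 0]
    · simp [hc]
    · intro n hn
      have : (c n).2 = 0 := by simp [hc, hn]
      rw [this, Real.zero_rpow (by positivity)]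
      simp
  rw [hsum]
  exact ENNReal.ofReal_lt_top

lemma lintegral_le_choquet (hk : 1 ≤ k) (S : Finset (Fin d)) (b : Fin d → ℝ)
    (e : Fin k ≃ {i : Fin d // i ∈ S}) {A A' : Set (Euc d)} (hA : MeasurableSet A)
    (hAH : A ⊆ hyperplane d S b) (hAA' : A ⊆ A') (f : Euc d → ℝ) :
    ∫⁻ x in A, ENNReal.ofReal |f x| ∂(Measure.hausdorffMeasure (k : ℝ)) ≤
      ENNReal.ofReal (cK k) *
        choquetIntegral (hausdorffContent d (k : ℝ)) A' (fun x => |f x|) := by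
  refine (lintegral_le_layer _ hA (fun x => |f x|)).trans ?_
  rw [choquetIntegral, ← lintegral_const_mul' _ _ ENNReal.ofReal_ne_top]
  refine lintegral_mono fun t => ?_
  have hsub : {x | x ∈ A ∧ t < |f x|} ⊆ {x | x ∈ A' ∧ t < |f x|} :=
    fun x hx => ⟨hAA' hx.1, hx.2⟩
  refine le_trans (measure_le_content hk S b e (fun x hx => hAH hx.1)) ?_
  exact mul_le_mul_right (hausdorffContent_mono hsub) _

end ContentCompare
section QC

variable {d k : ℕ}

lemma aemeasurable_of_quasicontinuous (hk : 1 ≤ k) (S : Finset (Fin d)) (b : Fin d → ℝ)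
    (e : Fin k ≃ {i : Fin d // i ∈ S}) {A : Set (Euc d)} (hA : MeasurableSet A)
    (hAH : A ⊆ hyperplane d S b) {u : Euc d → ℝ}
    (hu : QuasiContinuous (hausdorffContent d (k : ℝ)) u) :
    AEMeasurable u ((Measure.hausdorffMeasure (k : ℝ)).restrict A) := by
  choose O hOopen hOsmall hOcont using fun n : ℕ => hu (1 / (n + 1)) (by positivity)
  set μ := (Measure.hausdorffMeasure (k : ℝ) : Measure (Euc d)).restrict A with hμ
  set T := ⋂ n, O n with hT
  have hTmeas : MeasurableSet T := MeasurableSet.iInter fun n => (hOopen n).measurableSet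
  have hT0 : μ T = 0 := by
    have hbound : ∀ n : ℕ, μ T ≤ ENNReal.ofReal (cK k) * ENNReal.ofReal (1 / (n + 1)) := by
      intro n
      rw [hμ, Measure.restrict_apply' hA]
      calc Measure.hausdorffMeasure (k : ℝ) (T ∩ A)
          ≤ Measure.hausdorffMeasure (k : ℝ) (O n ∩ A) :=
            measure_mono (Set.inter_subset_inter_left _ (Set.iInter_subset _ n))
        _ ≤ ENNReal.ofReal (cK k) * hausdorffContent d (k : ℝ) (O n ∩ A) :=
            measure_le_content hk S b e fun x hx => hAH hx.2
        _ ≤ ENNReal.ofReal (cK k) * hausdorffContent d (k : ℝ) (O n) :=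
            mul_le_mul_right (hausdorffContent_mono Set.inter_subset_left) _
        _ ≤ ENNReal.ofReal (cK k) * ENNReal.ofReal (1 / (n + 1)) :=
            mul_le_mul_right (le_of_lt (hOsmall n)) _
    have htend : Filter.Tendsto (fun n : ℕ => ENNReal.ofReal (cK k) * ENNReal.ofReal (1 / (n + 1)))
        Filter.atTop (nhds 0) := by
      have h1 : Filter.Tendsto (fun n : ℕ => (1 : ℝ) / (n + 1)) Filter.atTop (nhds 0) :=
        tendsto_one_div_add_atTop_nhds_zero_nat
      have h2 : Filter.Tendsto (fun n : ℕ => ENNReal.ofReal ((1 : ℝ) / (n + 1)))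
          Filter.atTop (nhds 0) := by
        have := (ENNReal.continuous_ofReal.tendsto 0).comp h1
        simpa [Function.comp_def] using this
      have := ENNReal.Tendsto.const_mul (a := ENNReal.ofReal (cK k)) h2
        (Or.inr ENNReal.ofReal_ne_top)
      simpa using this
    have := ge_of_tendsto' htend hbound
    exact le_antisymm this zero_le
  have hmeasn : ∀ n : ℕ, AEMeasurable u (μ.restrict (O n)ᶜ) := fun n =>
    (hOcont n).aemeasurable (hOopen n).isClosed_compl.measurableSet
  have hUnion : AEMeasurable u (μ.restrict (⋃ n, (O n)ᶜ)) := aemeasurable_iUnion_iff.2 hmeasn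
  have hTc : (⋃ n, (O n)ᶜ) = Tᶜ := by rw [hT, Set.compl_iInter]
  rw [hTc] at hUnion
  obtain ⟨g, hgm, hge⟩ := hUnion
  refine ⟨g, hgm, ?_⟩
  have h1 : μ.restrict Tᶜ {x | ¬ u x = g x} = 0 := ae_iff.1 hge
  rw [Measure.restrict_apply' hTmeas.compl] at h1
  rw [Filter.eventuallyEq_iff_exists_mem]
  refine ⟨{x | u x = g x}, ?_, fun x hx => hx⟩
  rw [mem_ae_iff]
  have hsub : {x | u x = g x}ᶜ ⊆ ({x | ¬ u x = g x} ∩ Tᶜ) ∪ T := by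
    intro x hx
    by_cases hxT : x ∈ T
    · exact Or.inr hxT
    · exact Or.inl ⟨hx, hxT⟩
  refine le_antisymm ?_ zero_le
  calc μ {x | u x = g x}ᶜ ≤ μ (({x | ¬ u x = g x} ∩ Tᶜ) ∪ T) := measure_mono hsub
    _ ≤ μ ({x | ¬ u x = g x} ∩ Tᶜ) + μ T := measure_union_le _ _
    _ = 0 := by rw [h1, hT0, add_zero]

end QC

section SliceCube

variable {d k : ℕ}

lemma slice_eq_image (S : Finset (Fin d)) (b : Fin d → ℝ) (e : Fin k ≃ {i : Fin d // i ∈ S})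
    (Q : Cube d) (hb : ∀ i ∉ S, Q.corner i ≤ b i ∧ b i < Q.corner i + Q.side) :
    Q.set ∩ hyperplane d S b = sliceMap S b e ''
      {y : Euc k | ∀ j, Q.corner (e j) ≤ y j ∧ y j < Q.corner (e j) + Q.side} := by
  ext x
  constructor
  · rintro ⟨hxQ, hxH⟩
    refine ⟨WithLp.toLp 2 (fun j => x (e j)), fun j => hxQ (e j), ?_⟩
    ext i
    rw [sliceMap_apply]
    split_ifs with h
    · exact congrArg (fun j => x j) (congrArg Subtype.val (e.apply_symm_apply ⟨i, h⟩))
    · exact (hxH i h).symm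
  · rintro ⟨y, hy, rfl⟩
    refine ⟨fun i => ?_, sliceMap_mem_hyperplane S b e y⟩
    rw [sliceMap_apply]
    split_ifs with h
    · have := hy (e.symm ⟨i, h⟩)
      have hco : ((e (e.symm ⟨i, h⟩) : {i : Fin d // i ∈ S}) : Fin d) = i := by
        rw [e.apply_symm_apply]
      rwa [hco] at this
    · exact hb i h

lemma volume_toPi_box (a : Fin k → ℝ) {s : ℝ} (hs : 0 < s) :
    volume (toPi '' {y : Euc k | ∀ j, a j ≤ y j ∧ y j < a j + s}) = ENNReal.ofReal (s ^ k) := by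
  have himg : toPi '' {y : Euc k | ∀ j, a j ≤ y j ∧ y j < a j + s} =
      Set.pi Set.univ (fun j => Set.Ico (a j) (a j + s)) := by
    ext z
    constructor
    · rintro ⟨y, hy, rfl⟩
      intro j _
      exact hy j
    · intro hz
      exact ⟨ofPi z, fun j => hz j (Set.mem_univ j), rfl⟩
  rw [himg, volume_pi_pi]
  simp only [Real.volume_Ico, add_sub_cancel_left]
  rw [Finset.prod_const, ← ENNReal.ofReal_pow hs.le]
  simp

lemma measure_slice_cube_lower (hk : 1 ≤ k) (S : Finset (Fin d)) (b : Fin d → ℝ)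
    (e : Fin k ≃ {i : Fin d // i ∈ S}) (Q : Cube d)
    (hb : ∀ i ∉ S, Q.corner i ≤ b i ∧ b i < Q.corner i + Q.side) :
    ENNReal.ofReal (Q.side ^ k) ≤
      Measure.hausdorffMeasure (k : ℝ) (Q.set ∩ hyperplane d S b) := by
  rw [slice_eq_image S b e Q hb]
  rw [(isometry_sliceMap S b e).hausdorffMeasure_image (Or.inl (by positivity))]
  rw [← volume_toPi_box (fun j => Q.corner (e j)) Q.side_pos]
  exact volume_image_toPi_le hk _

lemma measure_slice_cube_lt_top (hk : 1 ≤ k) (S : Finset (Fin d)) (b : Fin d → ℝ)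
    (e : Fin k ≃ {i : Fin d // i ∈ S}) (Q : Cube d) {z : Euc d}
    (hz : z ∈ Q.set) :
    Measure.hausdorffMeasure (k : ℝ) (Q.set ∩ hyperplane d S b) < ⊤ := by
  have hball : Q.set ⊆ Metric.ball z ((d : ℝ) * Q.side + 2) := by
    intro x hx
    rw [Metric.mem_ball, EuclideanSpace.dist_eq]
    have hcoord : ∀ i, dist (x i) (z i) ^ 2 ≤ Q.side ^ 2 := by
      intro i
      have h1 := hx i
      have h2 := hz i
      rw [Real.dist_eq]
      have habs : |x i - z i| ≤ Q.side := by
        rw [abs_le]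
        constructor <;> linarith [h1.1, h1.2, h2.1, h2.2]
      have h0 : (0:ℝ) ≤ |x i - z i| := abs_nonneg _
      nlinarith
    have hs := Q.side_pos
    have hd0 : (0:ℝ) ≤ (d:ℝ) := Nat.cast_nonneg d
    calc Real.sqrt (∑ i, dist (x i) (z i) ^ 2)
        ≤ Real.sqrt (∑ _i : Fin d, Q.side ^ 2) :=
          Real.sqrt_le_sqrt (Finset.sum_le_sum fun i _ => hcoord i)
      _ = Real.sqrt ((d : ℝ) * Q.side ^ 2) := by rw [Finset.sum_const]; simp [mul_comm]
      _ ≤ Real.sqrt (((d : ℝ) * Q.side + 1) ^ 2) := by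
          refine Real.sqrt_le_sqrt ?_
          have hdd : (0:ℝ) ≤ (d:ℝ) * ((d:ℝ) - 1) := by
            rcases Nat.eq_zero_or_pos d with h | h
            · simp [h]
            · have h1 : (1:ℝ) ≤ (d:ℝ) := by exact_mod_cast h
              nlinarith
          nlinarith [mul_nonneg hdd (sq_nonneg Q.side), mul_nonneg hd0 hs.le]
      _ = (d : ℝ) * Q.side + 1 := Real.sqrt_sq (by positivity)
      _ < (d : ℝ) * Q.side + 2 := by linarith
  refine lt_of_le_of_lt (measure_le_content hk S b e Set.inter_subset_right) ?_
  refine ENNReal.mul_lt_top ENNReal.ofReal_lt_top ?_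
  exact content_lt_top_of_subset_ball hk (fun x hx => hball hx.1)

end SliceCube
section Osc

lemma lintegral_sub_avg_le {X : Type*} [MeasurableSpace X] (μ : Measure X) (A : Set X)
    (hA0 : μ A ≠ 0) (hAt : μ A ≠ ⊤) {u : X → ℝ} (hint : Integrable u (μ.restrict A)) (c : ℝ) :
    ∫⁻ x in A, ENNReal.ofReal |u x - ⨍ y in A, u y ∂μ| ∂μ ≤
      2 * ∫⁻ x in A, ENNReal.ofReal |u x - c| ∂μ := by
  have hfin : IsFiniteMeasure (μ.restrict A) := by
    constructor
    rw [Measure.restrict_apply_univ]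
    exact lt_top_iff_ne_top.2 hAt
  have htR : (μ A).toReal ≠ 0 := ENNReal.toReal_ne_zero.2 ⟨hA0, hAt⟩
  set m := ⨍ y in A, u y ∂μ with hm
  have hintc : Integrable (fun x => u x - c) (μ.restrict A) := hint.sub (integrable_const c)
  have habs : Integrable (fun x => |u x - c|) (μ.restrict A) := hintc.abs
  have hmc : |m - c| ≤ (μ A).toReal⁻¹ * ∫ x in A, |u x - c| ∂μ := by
    have h1 : m - c = (μ A).toReal⁻¹ * ∫ x in A, (u x - c) ∂μ := by
      rw [hm, setAverage_eq, integral_sub hint (integrable_const c), setIntegral_const]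
      simp only [smul_eq_mul]
      rw [← measureReal_def] at htR ⊢
      field_simp
    rw [h1, abs_mul, abs_of_nonneg (inv_nonneg.2 ENNReal.toReal_nonneg)]
    refine mul_le_mul_of_nonneg_left ?_ (inv_nonneg.2 ENNReal.toReal_nonneg)
    have := norm_integral_le_integral_norm (μ := μ.restrict A) (f := fun x => u x - c)
    simpa [Real.norm_eq_abs] using this
  have hkey : ENNReal.ofReal |m - c| * μ A ≤ ∫⁻ x in A, ENNReal.ofReal |u x - c| ∂μ := by
    have hof : ENNReal.ofReal (∫ x in A, |u x - c| ∂μ) =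
        ∫⁻ x in A, ENNReal.ofReal |u x - c| ∂μ :=
      ofReal_integral_eq_lintegral_ofReal habs
        (Filter.Eventually.of_forall fun x => abs_nonneg _)
    have hinv : ENNReal.ofReal ((μ A).toReal⁻¹) = (μ A)⁻¹ := by
      rw [← ENNReal.toReal_inv, ENNReal.ofReal_toReal (ENNReal.inv_ne_top.2 hA0)]
    calc ENNReal.ofReal |m - c| * μ A
        ≤ ENNReal.ofReal ((μ A).toReal⁻¹ * ∫ x in A, |u x - c| ∂μ) * μ A :=
          mul_le_mul_left (ENNReal.ofReal_le_ofReal hmc) _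
      _ = (μ A)⁻¹ * (∫⁻ x in A, ENNReal.ofReal |u x - c| ∂μ) * μ A := by
          rw [ENNReal.ofReal_mul (inv_nonneg.2 ENNReal.toReal_nonneg), hof, hinv]
      _ = (μ A)⁻¹ * μ A * (∫⁻ x in A, ENNReal.ofReal |u x - c| ∂μ) := by ring
      _ = ∫⁻ x in A, ENNReal.ofReal |u x - c| ∂μ := by
          rw [ENNReal.inv_mul_cancel hA0 hAt, one_mul]
  calc ∫⁻ x in A, ENNReal.ofReal |u x - m| ∂μ
      ≤ ∫⁻ x in A, (ENNReal.ofReal |u x - c| + ENNReal.ofReal |m - c|) ∂μ := by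
        refine lintegral_mono fun x => ?_
        rw [← ENNReal.ofReal_add (abs_nonneg _) (abs_nonneg _)]
        refine ENNReal.ofReal_le_ofReal ?_
        calc |u x - m| ≤ |u x - c| + |c - m| := abs_sub_le _ _ _
          _ = |u x - c| + |m - c| := by rw [abs_sub_comm c m]
    _ = (∫⁻ x in A, ENNReal.ofReal |u x - c| ∂μ) + ENNReal.ofReal |m - c| * μ A := by
        rw [lintegral_add_right _ measurable_const, lintegral_const,
          Measure.restrict_apply_univ]
    _ ≤ (∫⁻ x in A, ENNReal.ofReal |u x - c| ∂μ) +
          ∫⁻ x in A, ENNReal.ofReal |u x - c| ∂μ := add_le_add_right hkey _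
    _ = 2 * ∫⁻ x in A, ENNReal.ofReal |u x - c| ∂μ := (two_mul _).symm

end Osc
section GoodCube

variable {d k : ℕ}

lemma exists_good_cube (hk : 1 ≤ k) (S : Finset (Fin d)) (hS : S.card = k) (b : Fin d → ℝ)
    (Q₀ Q : Cube d) (hsub : Q.set ∩ hyperplane d S b ⊆ Q₀.set)
    (hne : (Q.set ∩ hyperplane d S b).Nonempty) :
    ∃ Q'' : Cube d, Q''.side = Q.side ∧ Q''.set ⊆ Q₀.set ∧
      Q''.set ∩ hyperplane d S b = Q.set ∩ hyperplane d S b := by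
  obtain ⟨z, hzQ, hzH⟩ := hne
  have hfixed : ∀ i ∉ S, Q.corner i ≤ b i ∧ b i < Q.corner i + Q.side := by
    intro i hi
    have := hzQ i
    rwa [hzH i hi] at this
  have hz0 : z ∈ Q₀.set := hsub ⟨hzQ, hzH⟩
  have hfixed₀ : ∀ i ∉ S, Q₀.corner i ≤ b i ∧ b i < Q₀.corner i + Q₀.side := by
    intro i hi
    have := hz0 i
    rwa [hzH i hi] at this
  have hfree : ∀ i ∈ S, ∀ ξ, Q.corner i ≤ ξ → ξ < Q.corner i + Q.side →
      Q₀.corner i ≤ ξ ∧ ξ < Q₀.corner i + Q₀.side := by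
    intro i hiS ξ h1 h2
    classical
    set z' : Euc d := WithLp.toLp 2 (fun j => if j = i then ξ else z j) with hz'
    have hz'Q : z' ∈ Q.set := by
      intro j
      by_cases hj : j = i
      · subst hj
        have : z' j = ξ := by simp [hz']
        rw [this]
        exact ⟨h1, h2⟩
      · have : z' j = z j := by simp [hz', hj]
        rw [this]
        exact hzQ j
    have hz'H : z' ∈ hyperplane d S b := by
      intro j hj
      have hji : j ≠ i := fun h => hj (h ▸ hiS)
      have : z' j = z j := by simp [hz', hji]
      rw [this]
      exact hzH j hj
    have hmem := hsub ⟨hz'Q, hz'H⟩ i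
    have hzi : z' i = ξ := by simp [hz']
    rwa [hzi] at hmem
  have hint : ∀ i ∈ S, Q₀.corner i ≤ Q.corner i ∧
      Q.corner i + Q.side ≤ Q₀.corner i + Q₀.side := by
    intro i hiS
    have hs := Q.side_pos
    refine ⟨(hfree i hiS (Q.corner i) le_rfl (by linarith)).1, ?_⟩
    by_contra hcon
    push_neg at hcon
    set ξ := max (Q.corner i) (Q₀.corner i + Q₀.side) with hξ
    have hξ1 : Q.corner i ≤ ξ := le_max_left _ _
    have hξ2 : ξ < Q.corner i + Q.side := max_lt (by linarith) hcon
    have h3 := (hfree i hiS ξ hξ1 hξ2).2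
    have h4 : Q₀.corner i + Q₀.side ≤ ξ := le_max_right _ _
    linarith
  have hside : Q.side ≤ Q₀.side := by
    obtain ⟨i, hiS⟩ := Finset.card_pos.1 (by rw [hS]; exact hk)
    have h := hint i hiS
    linarith [h.1, h.2]
  classical
  refine ⟨⟨fun i => if i ∈ S then Q.corner i else min (b i) (Q₀.corner i + Q₀.side - Q.side),
    Q.side, Q.side_pos⟩, rfl, ?_, ?_⟩
  · intro x hx
    intro i
    have h := hx i
    by_cases hiS : i ∈ S
    · simp only [hiS, if_pos] at h
      have hi2 := hint i hiS
      exact ⟨by linarith [h.1, hi2.1], by linarith [h.2, hi2.2]⟩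
    · simp only [hiS, if_neg, if_false] at h
      have hf := hfixed₀ i hiS
      have hmin1 : min (b i) (Q₀.corner i + Q₀.side - Q.side) ≤ Q₀.corner i + Q₀.side - Q.side :=
        min_le_right _ _
      have hmin2 : Q₀.corner i ≤ min (b i) (Q₀.corner i + Q₀.side - Q.side) :=
        le_min hf.1 (by linarith)
      exact ⟨by linarith [h.1], by linarith [h.2]⟩
  · ext x
    simp only [Set.mem_inter_iff]
    constructor
    · rintro ⟨hxQ'', hxH⟩
      refine ⟨fun i => ?_, hxH⟩
      by_cases hiS : i ∈ S
      · have h := hxQ'' i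
        simpa [hiS] using h
      · rw [hxH i hiS]
        exact hfixed i hiS
    · rintro ⟨hxQ, hxH⟩
      refine ⟨fun i => ?_, hxH⟩
      by_cases hiS : i ∈ S
      · have h := hxQ i
        simpa [hiS] using h
      · rw [hxH i hiS]
        simp only [hiS, if_neg, if_false]
        have hf := hfixed₀ i hiS
        have hs := Q.side_pos
        constructor
        · exact min_le_left _ _
        · have : b i - Q.side < min (b i) (Q₀.corner i + Q₀.side - Q.side) :=
            lt_min (by linarith) (by linarith [hf.2])
          linarith

end GoodCube
theorem bmo_restriction (d k : ℕ) (hk : 1 ≤ k) (hkd : k ≤ d) (Q₀ : Cube d) :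
    ∃ C : ℝ, 0 < C ∧
      ∀ u : Euc d → ℝ, MemBMO d (k : ℝ) Q₀.set u →
        ∀ (S : Finset (Fin d)) (b : Fin d → ℝ), S.card = k →
          (Q₀.set ∩ hyperplane d S b).Nonempty →
          (∫⁻ x in Q₀.set ∩ hyperplane d S b, ENNReal.ofReal |u x|
              ∂(Measure.hausdorffMeasure (k : ℝ))) < ⊤ ∧
          bmoClassicalOnPlane d k Q₀ (hyperplane d S b) u ≤
            ENNReal.ofReal C * bmoSeminorm d (k : ℝ) Q₀.set u := by
  classical
  refine ⟨2 * cK k, by have := cK_pos k hk; linarith, ?_⟩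
  intro u hu S b hScard hne₀
  have e : Fin k ≃ {i : Fin d // i ∈ S} := (finCongr hScard.symm).trans S.equivFin.symm
  have hHmeas : MeasurableSet (hyperplane d S b) := measurableSet_hyperplane S b
  have hA₀meas : MeasurableSet (Q₀.set ∩ hyperplane d S b) :=
    (measurableSet_cubeSet Q₀).inter hHmeas
  constructor
  · refine lt_of_le_of_lt
      (lintegral_le_choquet hk S b e hA₀meas Set.inter_subset_right Set.inter_subset_left u) ?_
    exact ENNReal.mul_lt_top ENNReal.ofReal_lt_top hu.1.2
  · rw [bmoClassicalOnPlane]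
    refine iSup₂_le fun Q hQsub => ?_
    rcases Set.eq_empty_or_nonempty (Q.set ∩ hyperplane d S b) with hemp | hne'
    · rw [hemp]
      simp
    · obtain ⟨Q'', hQ''side, hQ''sub, hQ''slice⟩ :=
        exists_good_cube hk S hScard b Q₀ Q hQsub hne'
      set A := Q.set ∩ hyperplane d S b with hA
      have hAmeas : MeasurableSet A := (measurableSet_cubeSet Q).inter hHmeas
      have hAH : A ⊆ hyperplane d S b := Set.inter_subset_right
      obtain ⟨z, hz⟩ := hne'
      have hb' : ∀ i ∉ S, Q.corner i ≤ b i ∧ b i < Q.corner i + Q.side := by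
        intro i hi
        have := hz.1 i
        rwa [hz.2 i hi] at this
      have hlow : ENNReal.ofReal (Q.side ^ k) ≤ Measure.hausdorffMeasure (k : ℝ) A :=
        measure_slice_cube_lower hk S b e Q hb'
      have hpos : (0 : ℝ≥0∞) < ENNReal.ofReal (Q.side ^ k) := by
        rw [ENNReal.ofReal_pos]
        exact pow_pos Q.side_pos k
      have hAne0 : Measure.hausdorffMeasure (k : ℝ) A ≠ 0 := (lt_of_lt_of_le hpos hlow).ne'
      have hAtop : Measure.hausdorffMeasure (k : ℝ) A ≠ ⊤ :=
        (measure_slice_cube_lt_top hk S b e Q hz.1).ne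
      have haem : AEMeasurable u ((Measure.hausdorffMeasure (k : ℝ)).restrict A) :=
        aemeasurable_of_quasicontinuous hk S b e hAmeas hAH hu.1.1
      have hAQ'' : A ⊆ Q''.set := by
        intro x hx
        have hx' : x ∈ Q''.set ∩ hyperplane d S b := by rw [hQ''slice]; exact hx
        exact hx'.1
      have hlint_u : ∫⁻ x in A, ENNReal.ofReal |u x| ∂(Measure.hausdorffMeasure (k : ℝ)) < ⊤ :=
        lt_of_le_of_lt (lintegral_le_choquet hk S b e hAmeas hAH hQsub u)
          (ENNReal.mul_lt_top ENNReal.ofReal_lt_top hu.1.2)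
      have hint : Integrable u ((Measure.hausdorffMeasure (k : ℝ)).restrict A) := by
        refine ⟨haem.aestronglyMeasurable, ?_⟩
        rw [hasFiniteIntegral_iff_norm]
        simpa [Real.norm_eq_abs] using hlint_u
      set IQ := ∫⁻ x in A, ENNReal.ofReal
        |u x - ⨍ y in A, u y ∂(Measure.hausdorffMeasure (k : ℝ))|
          ∂(Measure.hausdorffMeasure (k : ℝ)) with hIQ
      have hperc : ∀ c : ℝ, (Measure.hausdorffMeasure (k : ℝ) A)⁻¹ * IQ ≤
          ENNReal.ofReal (2 * cK k) *
            (choquetIntegral (hausdorffContent d (k : ℝ)) Q''.set (fun x => |u x - c|) /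
              ENNReal.ofReal (Q''.side ^ (k : ℝ))) := by
        intro c
        have hosc : IQ ≤ 2 * ∫⁻ x in A, ENNReal.ofReal |u x - c|
            ∂(Measure.hausdorffMeasure (k : ℝ)) :=
          lintegral_sub_avg_le _ A hAne0 hAtop hint c
        have hchoqc : ∫⁻ x in A, ENNReal.ofReal |u x - c|
            ∂(Measure.hausdorffMeasure (k : ℝ)) ≤
            ENNReal.ofReal (cK k) *
              choquetIntegral (hausdorffContent d (k : ℝ)) Q''.set (fun x => |u x - c|) :=
          lintegral_le_choquet hk S b e hAmeas hAH hAQ'' (fun x => u x - c)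
        have hside' : ENNReal.ofReal (Q''.side ^ (k : ℝ)) = ENNReal.ofReal (Q.side ^ k) := by
          rw [hQ''side, Real.rpow_natCast]
        have h2 : (2 : ℝ≥0∞) * ENNReal.ofReal (cK k) = ENNReal.ofReal (2 * cK k) := by
          rw [ENNReal.ofReal_mul (by norm_num)]
          norm_num
        calc (Measure.hausdorffMeasure (k : ℝ) A)⁻¹ * IQ
            ≤ (ENNReal.ofReal (Q.side ^ k))⁻¹ *
              (2 * (ENNReal.ofReal (cK k) *
                choquetIntegral (hausdorffContent d (k : ℝ)) Q''.set (fun x => |u x - c|))) :=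
              mul_le_mul' (ENNReal.inv_le_inv' hlow)
                (hosc.trans (mul_le_mul_right hchoqc 2))
          _ = ENNReal.ofReal (2 * cK k) *
              (choquetIntegral (hausdorffContent d (k : ℝ)) Q''.set (fun x => |u x - c|) /
                ENNReal.ofReal (Q''.side ^ (k : ℝ))) := by
              rw [hside', div_eq_mul_inv, ← h2]
              ring
      have hC0 : ENNReal.ofReal (2 * cK k) ≠ 0 := by
        rw [Ne, ENNReal.ofReal_eq_zero, not_le]
        have := cK_pos k hk
        linarith
      have hfinal : (Measure.hausdorffMeasure (k : ℝ) A)⁻¹ * IQ ≤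
          ENNReal.ofReal (2 * cK k) * ⨅ c : ℝ,
            choquetIntegral (hausdorffContent d (k : ℝ)) Q''.set (fun x => |u x - c|) /
              ENNReal.ofReal (Q''.side ^ (k : ℝ)) :=
        le_mul_iInf' hC0 ENNReal.ofReal_ne_top hperc
      refine hfinal.trans (mul_le_mul_right ?_ _)
      exact le_iSup₂ (f := fun (Q' : Cube d) (_ : Q'.set ⊆ Q₀.set) => ⨅ c : ℝ,
        choquetIntegral (hausdorffContent d (k : ℝ)) Q'.set (fun x => |u x - c|) /
          ENNReal.ofReal (Q'.side ^ (k : ℝ))) Q'' hQ''sub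

end
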